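/- Conformable Rodrigues formula: for α ∈ (0,1] and n ∈ ℕ, (e^{x^α/α} / (α^n n!)) · T_α^n [x^{nα} e^{−x^α/α}] = Σ_{k=0}^{n} (−1)^k n!/(α^k (n−k)! (k!)²) x^{kα} for all x > 0, where T_α^n denotes the n-fold conformable derivative. -/

import Mathlib

open Finset

/-- The conformable derivative of order `α`. -/
noncomputable def cderiv (α : ℝ) (f : ℝ → ℝ) : ℝ → ℝ :=
  fun x => x ^ (1 - α) * deriv f x

/-- coefficients -/
noncomputable def cc (n m k : ℕ) : ℝ :=
  (-1) ^ (m - k) * (m.choose k) * ((n.factorial : ℝ) / ((n - k).factorial : ℝ))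

lemma cc_pascal (n m k : ℕ) (hm : m + 1 ≤ n) (hk : k ≤ m) :
    cc n m k * (((n - k : ℕ)) : ℝ) = cc n (m+1) (k+1) + cc n m (k+1) := by
  have h1 : k + 1 ≤ n := le_trans (Nat.succ_le_succ hk) hm
  obtain ⟨j, hj⟩ : ∃ j, n - k = j + 1 :=
    ⟨n - k - 1, (Nat.succ_pred_eq_of_pos (by omega)).symm⟩
  have hj2 : n - (k + 1) = j := by omega
  have hfac : ((n - k).factorial : ℝ) = (j + 1) * (j.factorial : ℝ) := by
    rw [hj]; push_cast [Nat.factorial_succ]; ring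
  rcases eq_or_lt_of_le hk with rfl | hlt
  · have hc0 : k.choose (k+1) = 0 := Nat.choose_eq_zero_of_lt (by omega)
    simp only [cc, hj, hj2, hc0, Nat.sub_self, Nat.choose_self, Nat.succ_sub_one,
      Nat.cast_zero, Nat.cast_one, hfac]
    have hjf : (j.factorial : ℝ) ≠ 0 := Nat.cast_ne_zero.2 j.factorial_ne_zero
    have hj1 : ((j:ℝ) + 1) ≠ 0 := by positivity
    push_cast [Nat.factorial_succ]
    field_simp
    ring
  · obtain ⟨i, hi⟩ : ∃ i, m - k = i + 1 :=
      ⟨m - k - 1, (Nat.succ_pred_eq_of_pos (by omega)).symm⟩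
    have hi2 : m - (k+1) = i := by omega
    have hi3 : (m+1) - (k+1) = i + 1 := by omega
    have hch : ((m+1).choose (k+1) : ℝ) = (m.choose k : ℝ) + (m.choose (k+1) : ℝ) := by
      rw [Nat.choose_succ_succ]; push_cast; ring
    simp only [cc, hj, hj2, hi, hi2, hi3, hfac, hch]
    have hjf : (j.factorial : ℝ) ≠ 0 := Nat.cast_ne_zero.2 j.factorial_ne_zero
    have hj1 : ((j:ℝ) + 1) ≠ 0 := by positivity
    push_cast [Nat.factorial_succ]
    field_simp
    ring

lemma key (n m : ℕ) (hm : m + 1 ≤ n) (t : ℝ) :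
    ∑ k ∈ range (m+1), cc n m k * ((((n - k : ℕ)) : ℝ) * t ^ (n - k - 1) - t ^ (n - k))
      = ∑ k ∈ range (m+2), cc n (m+1) k * t ^ (n - k) := by
  rw [Finset.sum_range_succ' (fun k => cc n (m+1) k * t ^ (n - k)) (m+1)]
  have step : ∀ k ∈ range (m+1),
      cc n m k * ((((n - k : ℕ)) : ℝ) * t ^ (n - k - 1) - t ^ (n - k))
        = cc n (m+1) (k+1) * t ^ (n - (k+1))
          + ((fun k => cc n m k * t ^ (n - k)) (k+1) - (fun k => cc n m k * t ^ (n - k)) k) := by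
    intro k hk
    have hk' : k ≤ m := Nat.lt_succ_iff.mp (mem_range.mp hk)
    have hp := cc_pascal n m k hm hk'
    have hss : n - k - 1 = n - (k + 1) := by omega
    simp only [hss]
    rw [show cc n m k * ((((n - k : ℕ)) : ℝ) * t ^ (n - (k+1)) - t ^ (n - k))
        = (cc n m k * (((n - k : ℕ)) : ℝ)) * t ^ (n - (k+1)) - cc n m k * t ^ (n - k) by ring, hp]
    ring
  rw [Finset.sum_congr rfl step, Finset.sum_add_distrib, Finset.sum_range_sub (fun k => cc n m k * t ^ (n - k)) (m+1)]
  have hz : cc n m (m+1) = 0 := by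
    simp [cc, Nat.choose_eq_zero_of_lt (Nat.lt_succ_self m)]
  have h0 : cc n (m+1) 0 = -cc n m 0 := by
    simp only [cc, Nat.sub_zero, Nat.choose_zero_right, pow_succ]
    ring
  rw [hz, h0]
  ring

lemma hasDerivAt_term (α : ℝ) (hα : 0 < α) (j : ℕ) {x : ℝ} (hx : 0 < x) :
    HasDerivAt (fun y : ℝ => Real.exp (-y ^ α / α) * (y ^ α / α) ^ j)
      (Real.exp (-x ^ α / α) * ((j : ℝ) * (x ^ α / α) ^ (j - 1) - (x ^ α / α) ^ j)
        * x ^ (α - 1)) x := by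
  have ht : HasDerivAt (fun y : ℝ => y ^ α / α) (x ^ (α - 1)) x := by
    have h := (Real.hasDerivAt_rpow_const (p := α) (Or.inl hx.ne')).div_const α
    simpa [mul_div_assoc, mul_div_cancel_left₀ _ hα.ne'] using h
  have hexp : HasDerivAt (fun y : ℝ => Real.exp (-y ^ α / α))
      (Real.exp (-x ^ α / α) * (-(x ^ (α - 1)))) x := by
    have h := (ht.neg).exp
    simpa [neg_div] using h
  have hpow := ht.fun_pow j
  have h := hexp.fun_mul hpow
  refine h.congr_deriv ?_
  ring

lemma aux (α : ℝ) (hα0 : 0 < α) (n : ℕ) :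
    ∀ m, m ≤ n → ∀ x : ℝ, 0 < x →
      (cderiv α)^[m] (fun u : ℝ => u ^ (n * α) * Real.exp (-u ^ α / α)) x
        = α ^ n * ∑ k ∈ range (m+1),
            cc n m k * (Real.exp (-x ^ α / α) * (x ^ α / α) ^ (n - k)) := by
  intro m
  induction m with
  | zero =>
    intro _ x hx
    simp only [Function.iterate_zero, id_eq, zero_add, Finset.sum_range_one, cc,
      Nat.sub_zero, Nat.choose_zero_right, pow_zero, Nat.cast_one]
    have h1 : (x ^ α / α) ^ n = x ^ ((n : ℝ) * α) / α ^ n := by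
      rw [div_pow, ← Real.rpow_natCast (x ^ α) n, ← Real.rpow_mul hx.le, mul_comm α]
    rw [h1]
    have hnf : (n.factorial : ℝ) ≠ 0 := Nat.cast_ne_zero.2 n.factorial_ne_zero
    field_simp
  | succ m ih =>
    intro hm x hx
    have hm' : m ≤ n := Nat.le_of_succ_le hm
    rw [Function.iterate_succ_apply']
    show x ^ (1 - α) * deriv ((cderiv α)^[m] _) x = _
    have hev : (cderiv α)^[m] (fun u : ℝ => u ^ (n * α) * Real.exp (-u ^ α / α))
        =ᶠ[nhds x] (fun y : ℝ => α ^ n * ∑ k ∈ range (m+1),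
            cc n m k * (Real.exp (-y ^ α / α) * (y ^ α / α) ^ (n - k))) := by
      filter_upwards [eventually_gt_nhds hx] with y hy using ih hm' y hy
    rw [hev.deriv_eq]
    have hD : HasDerivAt (fun y : ℝ => α ^ n * ∑ k ∈ range (m+1),
          cc n m k * (Real.exp (-y ^ α / α) * (y ^ α / α) ^ (n - k)))
        (α ^ n * ∑ k ∈ range (m+1),
          cc n m k * (Real.exp (-x ^ α / α)
            * (((n - k : ℕ) : ℝ) * (x ^ α / α) ^ (n - k - 1) - (x ^ α / α) ^ (n - k))
            * x ^ (α - 1))) x := by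
      apply HasDerivAt.const_mul
      apply HasDerivAt.fun_sum
      intro k _
      exact (hasDerivAt_term α hα0 (n - k) hx).const_mul _
    rw [hD.deriv]
    have hxw : x ^ (1 - α) * x ^ (α - 1) = 1 := by
      rw [← Real.rpow_add hx]; norm_num
    have hfac : ∑ k ∈ range (m+1),
        cc n m k * (Real.exp (-x ^ α / α)
          * (((n - k : ℕ) : ℝ) * (x ^ α / α) ^ (n - k - 1) - (x ^ α / α) ^ (n - k))
          * x ^ (α - 1))
        = (Real.exp (-x ^ α / α) * ∑ k ∈ range (m+1),
            cc n m k * (((n - k : ℕ) : ℝ) * (x ^ α / α) ^ (n - k - 1) - (x ^ α / α) ^ (n - k)))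
          * x ^ (α - 1) := by
      rw [Finset.mul_sum, Finset.sum_mul]
      exact Finset.sum_congr rfl fun k _ => by ring
    rw [hfac, key n m hm (x ^ α / α)]
    have hR : (∑ k ∈ range (m+2), cc n (m+1) k * (Real.exp (-x ^ α / α) * (x ^ α / α) ^ (n - k)))
        = Real.exp (-x ^ α / α) * ∑ k ∈ range (m+2), cc n (m+1) k * (x ^ α / α) ^ (n - k) := by
      rw [Finset.mul_sum]; exact Finset.sum_congr rfl fun k _ => by ring
    rw [hR]
    generalize (∑ k ∈ range (m+2), cc n (m+1) k * (x ^ α / α) ^ (n - k)) = S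
    calc x ^ (1 - α) * (α ^ n * (Real.exp (-x ^ α / α) * S * x ^ (α - 1)))
        = α ^ n * (Real.exp (-x ^ α / α) * S) * (x ^ (1 - α) * x ^ (α - 1)) := by ring
      _ = α ^ n * (Real.exp (-x ^ α / α) * S) := by rw [hxw, mul_one]

/-- Conformable Rodrigues formula for the conformable Laguerre polynomials. -/
theorem conformable_rodrigues (α : ℝ) (hα0 : 0 < α) (hα1 : α ≤ 1) (n : ℕ) :
    ∀ x > 0,
      Real.exp (x ^ α / α) / (α ^ n * n.factorial)
          * ((cderiv α)^[n] (fun u : ℝ => u ^ (n * α) * Real.exp (-u ^ α / α))) x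
        = ∑ k ∈ range (n + 1),
            (-1 : ℝ) ^ k * (n.factorial : ℝ) /
                (α ^ k * ((n - k).factorial : ℝ) * ((k.factorial : ℝ)) ^ 2)
              * x ^ (k * α) := by
  intro x hx
  rw [aux α hα0 n n le_rfl x hx]
  rw [← Finset.sum_range_reflect
    (fun k => cc n n k * (Real.exp (-x ^ α / α) * (x ^ α / α) ^ (n - k))) (n+1)]
  simp only [Nat.add_sub_cancel]
  rw [Finset.mul_sum, Finset.mul_sum]
  refine Finset.sum_congr rfl fun k hk => ?_
  have hkn : k ≤ n := Nat.lt_succ_iff.mp (mem_range.mp hk)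
  have hss : n - (n - k) = k := Nat.sub_sub_self hkn
  simp only [cc, hss, Nat.choose_symm hkn]
  have h1 : (x ^ α / α) ^ k = x ^ ((k : ℝ) * α) / α ^ k := by
    rw [div_pow, ← Real.rpow_natCast (x ^ α) k, ← Real.rpow_mul hx.le, mul_comm α]
  have h2 : Real.exp (-x ^ α / α) = (Real.exp (x ^ α / α))⁻¹ := by
    rw [neg_div, Real.exp_neg]
  rw [h1, h2]
  have hcmf : ((n.choose k : ℝ)) * (k.factorial : ℝ) * ((n - k).factorial : ℝ)
      = (n.factorial : ℝ) := by
    exact_mod_cast congrArg (Nat.cast (R := ℝ)) (Nat.choose_mul_factorial_mul_factorial hkn)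
  have hne : (Real.exp (x ^ α / α)) ≠ 0 := Real.exp_ne_zero _
  have hkf : (k.factorial : ℝ) ≠ 0 := Nat.cast_ne_zero.2 k.factorial_ne_zero
  have hnkf : ((n - k).factorial : ℝ) ≠ 0 := Nat.cast_ne_zero.2 (n - k).factorial_ne_zero
  have hnf : (n.factorial : ℝ) ≠ 0 := Nat.cast_ne_zero.2 n.factorial_ne_zero
  have hαne : α ≠ 0 := hα0.ne'
  field_simp
  linear_combination hcmf
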